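/- Let ℓ_1, ..., ℓ_T each be σ-strongly convex with gradients bounded in norm by G. Then the Follow-The-Leader algorithm has regret at most (G²/(2σ))(log T + 1). -/

import Mathlib

open scoped RealInnerProductSpace

/-- Variational inequality: if `a` minimizes a differentiable `f` over a convex set `K`,
then `⟪∇f a, y - a⟫ ≥ 0` for all `y ∈ K`. -/
lemma ftl_vi {d : ℕ} {K : Set (EuclideanSpace ℝ (Fin d))} (hK : Convex ℝ K)
    {f : EuclideanSpace ℝ (Fin d) → ℝ} {g a y : EuclideanSpace ℝ (Fin d)}
    (hf : HasGradientAt f g a) (ha : a ∈ K) (hy : y ∈ K)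
    (hmin : ∀ z ∈ K, f a ≤ f z) : 0 ≤ ⟪g, y - a⟫ := by
  have hfd : HasFDerivWithinAt f (InnerProductSpace.toDual ℝ _ g) K a :=
    (hasGradientAt_iff_hasFDerivAt.mp hf).hasFDerivWithinAt
  have hcone : y - a ∈ posTangentConeAt K a :=
    sub_mem_posTangentConeAt_of_segment_subset (hK.segment_subset ha hy)
  have hlm : IsLocalMinOn f K a := (isMinOn_iff.mpr hmin).localize
  have h := hlm.hasFDerivWithinAt_nonneg hfd hcone
  simpa using h

/-- Gradient of a finite sum. -/
lemma ftl_grad_sum {d : ℕ} (ℓ : ℕ → EuclideanSpace ℝ (Fin d) → ℝ)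
    (ℓ' : ℕ → EuclideanSpace ℝ (Fin d) → EuclideanSpace ℝ (Fin d))
    (hdiff : ∀ t x, HasGradientAt (ℓ t) (ℓ' t x) x)
    (n : ℕ) (a : EuclideanSpace ℝ (Fin d)) :
    HasGradientAt (fun y => ∑ s ∈ Finset.range n, ℓ s y)
      (∑ s ∈ Finset.range n, ℓ' s a) a := by
  rw [hasGradientAt_iff_hasFDerivAt]
  have h : HasFDerivAt (fun y => ∑ s ∈ Finset.range n, ℓ s y)
      (∑ s ∈ Finset.range n, InnerProductSpace.toDual ℝ _ (ℓ' s a)) a :=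
    HasFDerivAt.fun_sum fun s _ => (hasGradientAt_iff_hasFDerivAt.mp (hdiff s a))
  simpa [map_sum] using h

theorem stmt_8_harmonic_bound (T : ℕ) (hT : 1 ≤ T) :
    ∑ t ∈ Finset.range T, (1 : ℝ) / (t + 1) ≤ Real.log T + 1 := by
  have h1 : ∑ t ∈ Finset.range T, (1 : ℝ) / (t + 1) = (harmonic T : ℝ) := by
    rw [harmonic]
    push_cast
    exact Finset.sum_congr rfl fun t _ => by ring
  have h2 := harmonic_le_one_add_log T
  rw [h1]
  linarith

/-- FTL with `σ`-strongly convex losses and gradient norms bounded by `G` has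
regret at most `(G²/(2σ)) (log T + 1)`. -/
theorem stmt_8 {d : ℕ} (K : Set (EuclideanSpace ℝ (Fin d)))
    (hK : Convex ℝ K) (hKc : IsCompact K) (T : ℕ) (hT : 1 ≤ T)
    (ℓ : ℕ → EuclideanSpace ℝ (Fin d) → ℝ)
    (ℓ' : ℕ → EuclideanSpace ℝ (Fin d) → EuclideanSpace ℝ (Fin d))
    (σ G : ℝ) (hσ : 0 < σ)
    (hdiff : ∀ t x, HasGradientAt (ℓ t) (ℓ' t x) x)
    (hsc : ∀ t, ∀ u v : EuclideanSpace ℝ (Fin d),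
      ℓ t u ≥ ℓ t v + ⟪ℓ' t v, u - v⟫ + σ / 2 * ‖u - v‖ ^ 2)
    (x : ℕ → EuclideanSpace ℝ (Fin d)) (hxK : ∀ t, x t ∈ K)
    (hG : ∀ t < T, ‖ℓ' t (x t)‖ ≤ G)
    (hftl : ∀ t, ∀ y ∈ K,
      ∑ s ∈ Finset.range t, ℓ s (x t) ≤ ∑ s ∈ Finset.range t, ℓ s y) :
    ∀ w ∈ K,
      ∑ t ∈ Finset.range T, ℓ t (x t) - ∑ t ∈ Finset.range T, ℓ t w ≤
        G ^ 2 / (2 * σ) * (Real.log T + 1) := by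
  intro w hw
  have hG0 : 0 ≤ G := le_trans (norm_nonneg _) (hG 0 hT)
  -- abbreviation for cumulative loss
  set F : ℕ → EuclideanSpace ℝ (Fin d) → ℝ := fun n y => ∑ s ∈ Finset.range n, ℓ s y with hF
  -- per-step bound: F (t+1) (x t) - F (t+1) (x (t+1)) ≤ G^2 / (2 σ (t+1))
  have hstep : ∀ t < T, F (t + 1) (x t) - F (t + 1) (x (t + 1)) ≤
      G ^ 2 / (2 * σ * (t + 1)) := by
    intro t ht
    set u := x (t + 1) with hu
    set v := x t with hv
    set r := ‖u - v‖ with hr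
    have hr0 : 0 ≤ r := norm_nonneg _
    -- strong convexity of the sum F (t+1)
    have h1 : F (t + 1) u ≥ F (t + 1) v +
        ⟪∑ s ∈ Finset.range (t + 1), ℓ' s v, u - v⟫ +
        (t + 1) * (σ / 2 * r ^ 2) := by
      have := Finset.sum_le_sum (f := fun s => ℓ s v + ⟪ℓ' s v, u - v⟫ + σ / 2 * ‖u - v‖ ^ 2)
        (g := fun s => ℓ s u) (s := Finset.range (t + 1)) (fun s _ => hsc s u v)
      simp only [Finset.sum_add_distrib, ← sum_inner, Finset.sum_const, Finset.card_range,
        nsmul_eq_mul] at this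
      push_cast at this ⊢
      simp only [hF]
      linarith
    -- variational inequality at x t for F t
    have h2 : 0 ≤ ⟪∑ s ∈ Finset.range t, ℓ' s v, u - v⟫ := by
      refine ftl_vi hK (ftl_grad_sum ℓ ℓ' hdiff t v) (hxK t) (hxK (t + 1)) ?_
      intro z hz
      exact hftl t z hz
    have hsplit : ⟪∑ s ∈ Finset.range (t + 1), ℓ' s v, u - v⟫ =
        ⟪∑ s ∈ Finset.range t, ℓ' s v, u - v⟫ + ⟪ℓ' t v, u - v⟫ := by
      rw [Finset.sum_range_succ, inner_add_left]
    -- Cauchy–Schwarz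
    have hcs : -⟪ℓ' t v, u - v⟫ ≤ G * r := by
      have h3 : |⟪ℓ' t v, u - v⟫| ≤ ‖ℓ' t v‖ * ‖u - v‖ := abs_real_inner_le_norm _ _
      have h4 : ‖ℓ' t v‖ * ‖u - v‖ ≤ G * r := by
        exact mul_le_mul_of_nonneg_right (hG t ht) hr0
      have := neg_abs_le ⟪ℓ' t v, u - v⟫
      linarith
    -- combine: δ ≤ G r - σ (t+1)/2 r²
    have h5 : F (t + 1) v - F (t + 1) u ≤ G * r - (t + 1) * (σ / 2 * r ^ 2) := by
      rw [hsplit] at h1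
      linarith
    -- AM–GM style bound
    have h6 : G * r - (t + 1) * (σ / 2 * r ^ 2) ≤ G ^ 2 / (2 * σ * (t + 1)) := by
      have ht1 : (0 : ℝ) < (t : ℝ) + 1 := by positivity
      rw [le_div_iff₀ (by positivity)]
      nlinarith [sq_nonneg (σ * ((t : ℝ) + 1) * r - G), mul_pos hσ ht1, sq_nonneg r]
    linarith
  -- telescoping: ∑ δ_t = ∑ ℓ t (x t) - F T (x T)
  have htel : ∑ t ∈ Finset.range T, (F (t + 1) (x t) - F (t + 1) (x (t + 1))) =
      ∑ t ∈ Finset.range T, ℓ t (x t) - F T (x T) := by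
    have h7 : ∀ t, F (t + 1) (x t) = F t (x t) + ℓ t (x t) := by
      intro t; simp [hF, Finset.sum_range_succ]
    calc ∑ t ∈ Finset.range T, (F (t + 1) (x t) - F (t + 1) (x (t + 1)))
        = ∑ t ∈ Finset.range T, (ℓ t (x t) + ((fun n => F n (x n)) t
            - (fun n => F n (x n)) (t + 1))) := by
          refine Finset.sum_congr rfl fun t _ => ?_
          simp only [h7]; ring
      _ = ∑ t ∈ Finset.range T, ℓ t (x t) + (F 0 (x 0) - F T (x T)) := by
          rw [Finset.sum_add_distrib, Finset.sum_range_sub' (fun n => F n (x n))]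
      _ = ∑ t ∈ Finset.range T, ℓ t (x t) - F T (x T) := by
          simp only [hF, Finset.range_zero, Finset.sum_empty, zero_sub]
          ring
  -- assemble
  have hcomp : F T (x T) ≤ ∑ t ∈ Finset.range T, ℓ t w := hftl T w hw
  have hsum : ∑ t ∈ Finset.range T, (F (t + 1) (x t) - F (t + 1) (x (t + 1))) ≤
      ∑ t ∈ Finset.range T, G ^ 2 / (2 * σ * (t + 1)) :=
    Finset.sum_le_sum fun t ht => hstep t (Finset.mem_range.mp ht)
  have hhar : ∑ t ∈ Finset.range T, G ^ 2 / (2 * σ * (t + 1)) ≤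
      G ^ 2 / (2 * σ) * (Real.log T + 1) := by
    have : ∑ t ∈ Finset.range T, G ^ 2 / (2 * σ * (t + 1)) =
        G ^ 2 / (2 * σ) * ∑ t ∈ Finset.range T, (1 : ℝ) / (t + 1) := by
      rw [Finset.mul_sum]
      refine Finset.sum_congr rfl fun t _ => ?_
      field_simp
    rw [this]
    refine mul_le_mul_of_nonneg_left (stmt_8_harmonic_bound T hT) (by positivity)
  linarith
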